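/- arXiv:2411.00127 — 9 statements merged into one kernel-verified Lean document; each statement's English description precedes it below -/
import Mathlib

section
/- Let Λ : ℍ → ℍ be a nonzero ℝ-linear map and let g, h ∈ 𝕊. Then A_Λ(h,g) ≤ ‖Λ‖², and equality A_Λ(h,g) = ‖Λ‖² holds if and only if Λ is complex linear of type (g,h). -/
noncomputable section

open Quaternion Classical

/-- The imaginary unit `i`. -/
def qi : ℍ[ℝ] := ⟨0, 1, 0, 0⟩
/-- The imaginary unit `j`. -/
def qj : ℍ[ℝ] := ⟨0, 0, 1, 0⟩
/-- The imaginary unit `k`. -/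
def qk : ℍ[ℝ] := ⟨0, 0, 0, 1⟩

/-- The 2-sphere of quaternionic imaginary units. -/
def sph : Set ℍ[ℝ] := {x | x ^ 2 = -1}

/-- The real scalar product `⟨x, y⟩ = Re (x * ȳ)` on `ℍ`. -/
def qip (x y : ℍ[ℝ]) : ℝ := (x * star y).re

/-- `‖Λ‖²`, the squared norm of a real linear map `Λ : ℍ → ℍ`. -/
def normSqL (Λ : ℍ[ℝ] →ₗ[ℝ] ℍ[ℝ]) : ℝ :=
  (1 / 4) * (normSq (Λ 1) + normSq (Λ qi) + normSq (Λ qj) + normSq (Λ qk))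

/-- The bilinear expression `A_Λ(p, q) = ⟨R_p ∘ Λ, Λ ∘ L_q⟩`. -/
def Aform (Λ : ℍ[ℝ] →ₗ[ℝ] ℍ[ℝ]) (p q : ℍ[ℝ]) : ℝ :=
  (1 / 4) * (qip (Λ 1 * p) (Λ (q * 1)) + qip (Λ qi * p) (Λ (q * qi))
    + qip (Λ qj * p) (Λ (q * qj)) + qip (Λ qk * p) (Λ (q * qk)))

/-- The trace of the bilinear form `A_Λ` on `Im ℍ`. -/
def trA (Λ : ℍ[ℝ] →ₗ[ℝ] ℍ[ℝ]) : ℝ := Aform Λ qi qi + Aform Λ qj qj + Aform Λ qk qk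

/-- The bilinear form `M_Λ(p,q) = (1/2) tr(A_Λ) ⟨p,q⟩ - (1/2) A_Λ(p,q)`. -/
def Mform (Λ : ℍ[ℝ] →ₗ[ℝ] ℍ[ℝ]) (p q : ℍ[ℝ]) : ℝ :=
  (1 / 2) * trA Λ * qip p q - (1 / 2) * Aform Λ p q

/-- `Λ` is complex linear of type `(g, h)` if `Λ(g x) = Λ(x) h` for all `x`. -/
def IsCLType (Λ : ℍ[ℝ] →ₗ[ℝ] ℍ[ℝ]) (g h : ℍ[ℝ]) : Prop := ∀ x, Λ (g * x) = Λ x * h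

/-- `Λ` is regular (right Fueter-regular). -/
def IsReg (Λ : ℍ[ℝ] →ₗ[ℝ] ℍ[ℝ]) : Prop :=
  Λ 1 * 1 + Λ qi * qi + Λ qj * qj + Λ qk * qk = 0

/-- The antiautomorphism-type map `θ̄_p(x) = p x̄ p⁻¹` as a real linear map. -/
def thetaBar (p : ℍ[ℝ]) : ℍ[ℝ] →ₗ[ℝ] ℍ[ℝ] where
  toFun x := p * star x * p⁻¹
  map_add' x y := by simp [star_add, mul_add, add_mul]
  map_smul' r x := by simp [mul_smul_comm, smul_mul_assoc]

/-- Left multiplication by a quaternion, as a real linear map. -/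
def lmul (a : ℍ[ℝ]) : ℍ[ℝ] →ₗ[ℝ] ℍ[ℝ] := LinearMap.mulLeft ℝ a

/-- The size `s(Λ)` of a (regular) real linear map: the minimal number of nonzero
coefficients `λ₁, λ₂, λ₃` in a decomposition `Λ = λ₁ θ̄_{e₁} + λ₂ θ̄_{e₂} + λ₃ θ̄_{e₃}`,
over all triples of pairwise orthogonal imaginary units `e₁, e₂, e₃`. -/
def qsize (Λ : ℍ[ℝ] →ₗ[ℝ] ℍ[ℝ]) : ℕ :=
  sInf { n | ∃ e₁ e₂ e₃ l₁ l₂ l₃ : ℍ[ℝ],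
    e₁ ∈ sph ∧ e₂ ∈ sph ∧ e₃ ∈ sph ∧
    qip e₁ e₂ = 0 ∧ qip e₁ e₃ = 0 ∧ qip e₂ e₃ = 0 ∧
    Λ = (lmul l₁).comp (thetaBar e₁) + (lmul l₂).comp (thetaBar e₂)
        + (lmul l₃).comp (thetaBar e₃) ∧
    n = (if l₁ = 0 then 0 else 1) + (if l₂ = 0 then 0 else 1) + (if l₃ = 0 then 0 else 1) }

/-- The 3×3 matrix of `M_Λ` with respect to the basis `(i, j, k)` of `Im ℍ`. -/
def Mmat (Λ : ℍ[ℝ] →ₗ[ℝ] ℍ[ℝ]) : Matrix (Fin 3) (Fin 3) ℝ :=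
  Matrix.of fun α β => Mform Λ (![qi, qj, qk] α) (![qi, qj, qk] β)

/-- The basis `(1, i, j, k)` of `ℍ` over `ℝ`. -/
def qBasis : Module.Basis (Fin 4) ℝ ℍ[ℝ] := QuaternionAlgebra.basisOneIJK (-1) 0 (-1)

/-- The adjugate `Λ^adjg` of a real linear map `Λ : ℍ → ℍ`: the linear map whose matrix
with respect to the basis `(1, i, j, k)` is the adjugate of the matrix of `Λ`. -/
def adjg (Λ : ℍ[ℝ] →ₗ[ℝ] ℍ[ℝ]) : ℍ[ℝ] →ₗ[ℝ] ℍ[ℝ] :=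
  Matrix.toLin qBasis qBasis (Matrix.adjugate (LinearMap.toMatrix qBasis qBasis Λ))

/-- The embedding `ℂ → ℍ`, `x + √-1 y ↦ x + y i`. -/
def iotaC (z : ℂ) : ℍ[ℝ] := ⟨z.re, z.im, 0, 0⟩

/-- The map `L_Λ : Im ℍ → Im ℍ` representing `A_Λ`: `⟨p, L_Λ(q)⟩ = A_Λ(p, q)`. -/
def LLam (Λ : ℍ[ℝ] →ₗ[ℝ] ℍ[ℝ]) (q : ℍ[ℝ]) : ℍ[ℝ] :=
  Aform Λ qi q • qi + Aform Λ qj q • qj + Aform Λ qk q • qk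

/-- The quadratic form `Q_Λ(q) = |L_Λ(q)|²`. -/
def QLam (Λ : ℍ[ℝ] →ₗ[ℝ] ℍ[ℝ]) (q : ℍ[ℝ]) : ℝ := normSq (LLam Λ q)

private lemma my_decomp (Λ : ℍ[ℝ] →ₗ[ℝ] ℍ[ℝ]) (x : ℍ[ℝ]) :
    Λ x = x.re • Λ 1 + x.imI • Λ qi + x.imJ • Λ qj + x.imK • Λ qk := by
  have hx : x = x.re • (1:ℍ[ℝ]) + x.imI • qi + x.imJ • qj + x.imK • qk := by
    ext <;> simp [Quaternion.re_smul] <;> simp [qi, qj, qk]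
  conv_lhs => rw [hx]
  simp [map_add, map_smul]

private lemma my_key (Λ : ℍ[ℝ] →ₗ[ℝ] ℍ[ℝ]) (g h : ℍ[ℝ]) :
    (normSq g + normSq h) * normSqL Λ - 2 * Aform Λ h g
    = (1/4) * (normSq (Λ (g*1) - Λ 1 * h) + normSq (Λ (g*qi) - Λ qi * h)
      + normSq (Λ (g*qj) - Λ qj * h) + normSq (Λ (g*qk) - Λ qk * h)) := by
  simp only [Aform, normSqL, qip, my_decomp Λ (g*1), my_decomp Λ (g*qi), my_decomp Λ (g*qj),
    my_decomp Λ (g*qk), normSq_def']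
  simp only [Quaternion.ext_iff, re_mul, imI_mul, imJ_mul, imK_mul,
    re_sub, imI_sub, imJ_sub, imK_sub, re_add, imI_add, imJ_add, imK_add,
    re_smul, imI_smul, imJ_smul, imK_smul, re_star, imI_star, imJ_star, imK_star,
    re_one, imI_one, imJ_one, imK_one, smul_eq_mul]
  simp only [qi, qj, qk]
  ring

private lemma my_sph_normSq {g : ℍ[ℝ]} (hg : g ∈ sph) : normSq g = 1 := by
  have h2 : normSq g ^ 2 = 1 := by
    have := map_pow normSq g 2
    rw [hg] at this
    simpa using this.symm
  nlinarith [normSq_nonneg (a := g)]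

/-- For a nonzero real linear map `Λ : ℍ → ℍ` and `g, h ∈ 𝕊`, `A_Λ(h,g) ≤ ‖Λ‖²`, with
equality if and only if `Λ` is complex linear of type `(g,h)`. -/
theorem stmt0 (Λ : ℍ[ℝ] →ₗ[ℝ] ℍ[ℝ]) (hΛ : Λ ≠ 0) (g h : ℍ[ℝ])
    (hg : g ∈ sph) (hh : h ∈ sph) :
    Aform Λ h g ≤ normSqL Λ ∧ (Aform Λ h g = normSqL Λ ↔ IsCLType Λ g h) := by
  have hk := my_key Λ g h
  rw [my_sph_normSq hg, my_sph_normSq hh] at hk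
  have hk' : normSqL Λ - Aform Λ h g
      = (1/8) * (normSq (Λ (g*1) - Λ 1 * h) + normSq (Λ (g*qi) - Λ qi * h)
      + normSq (Λ (g*qj) - Λ qj * h) + normSq (Λ (g*qk) - Λ qk * h)) := by
    linarith
  have n1 := normSq_nonneg (a := Λ (g*1) - Λ 1 * h)
  have n2 := normSq_nonneg (a := Λ (g*qi) - Λ qi * h)
  have n3 := normSq_nonneg (a := Λ (g*qj) - Λ qj * h)
  have n4 := normSq_nonneg (a := Λ (g*qk) - Λ qk * h)
  constructor
  · linarith
  constructor
  · intro heq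
    rw [heq, sub_self] at hk'
    have e1 : Λ (g*1) = Λ 1 * h := by
      rw [← sub_eq_zero, ← normSq_eq_zero]; linarith
    have e2 : Λ (g*qi) = Λ qi * h := by
      rw [← sub_eq_zero, ← normSq_eq_zero]; linarith
    have e3 : Λ (g*qj) = Λ qj * h := by
      rw [← sub_eq_zero, ← normSq_eq_zero]; linarith
    have e4 : Λ (g*qk) = Λ qk * h := by
      rw [← sub_eq_zero, ← normSq_eq_zero]; linarith
    intro x
    have hx : x = x.re • (1:ℍ[ℝ]) + x.imI • qi + x.imJ • qj + x.imK • qk := by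
      ext <;> simp [Quaternion.re_smul] <;> simp [qi, qj, qk]
    calc Λ (g * x) = Λ (x.re • (g*1) + x.imI • (g*qi) + x.imJ • (g*qj) + x.imK • (g*qk)) := by
          conv_lhs => rw [hx]
          congr 1
          simp [mul_add, mul_smul_comm, mul_one]
      _ = x.re • Λ (g*1) + x.imI • Λ (g*qi) + x.imJ • Λ (g*qj) + x.imK • Λ (g*qk) := by
          simp [map_add, map_smul]
      _ = (x.re • Λ 1 + x.imI • Λ qi + x.imJ • Λ qj + x.imK • Λ qk) * h := by
          rw [e1, e2, e3, e4]; simp [add_mul, smul_mul_assoc]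
      _ = Λ x * h := by rw [← my_decomp]
  · intro hcl
    have e1 := hcl 1
    have e2 := hcl qi
    have e3 := hcl qj
    have e4 := hcl qk
    rw [e1, e2, e3, e4] at hk'
    simp only [sub_self, normSq.map_zero] at hk'
    linarith


end
end

section
/- Let Λ : ℍ → ℍ be a nonzero ℝ-linear map and g ∈ 𝕊. Then Q_Λ(g) ≤ ‖Λ‖⁴; moreover Q_Λ(g) = ‖Λ‖⁴ holds if and only if there exists h ∈ 𝕊 such that Λ is complex linear of type (g,h). Furthermore, if Λ is complex linear of type (g,h) for some h ∈ 𝕊, then L_Λ(g) = ‖Λ‖²·h; in particular such an h is unique. -/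
noncomputable section

open Quaternion Classical

@[simp] lemma qi_re : qi.re = 0 := rfl
@[simp] lemma qi_imI : qi.imI = 1 := rfl
@[simp] lemma qi_imJ : qi.imJ = 0 := rfl
@[simp] lemma qi_imK : qi.imK = 0 := rfl
@[simp] lemma qj_re : qj.re = 0 := rfl
@[simp] lemma qj_imI : qj.imI = 0 := rfl
@[simp] lemma qj_imJ : qj.imJ = 1 := rfl
@[simp] lemma qj_imK : qj.imK = 0 := rfl
@[simp] lemma qk_re : qk.re = 0 := rfl
@[simp] lemma qk_imI : qk.imI = 0 := rfl
@[simp] lemma qk_imJ : qk.imJ = 0 := rfl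
@[simp] lemma qk_imK : qk.imK = 1 := rfl

lemma qip_expand (x y : ℍ[ℝ]) : qip x y = x.re*y.re + x.imI*y.imI + x.imJ*y.imJ + x.imK*y.imK := by
  simp [qip, Quaternion.re_mul]

lemma normSq_expand (a : ℍ[ℝ]) : normSq a = a.re^2 + a.imI^2 + a.imJ^2 + a.imK^2 :=
  Quaternion.normSq_def' a

lemma mem_sph_iff (x : ℍ[ℝ]) : x ∈ sph ↔ x.re = 0 ∧ normSq x = 1 := by
  constructor
  · intro hx
    have hx' : x * x = -1 := by rw [← sq]; exact hx
    have h1 : (x*x).re = (-1 : ℍ[ℝ]).re := congrArg _ hx'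
    have h2 : (x*x).imI = (-1 : ℍ[ℝ]).imI := congrArg _ hx'
    have h3 : (x*x).imJ = (-1 : ℍ[ℝ]).imJ := congrArg _ hx'
    have h4 : (x*x).imK = (-1 : ℍ[ℝ]).imK := congrArg _ hx'
    simp [Quaternion.re_mul, Quaternion.imI_mul, Quaternion.imJ_mul, Quaternion.imK_mul] at h1 h2 h3 h4
    have h5 : x.re ^ 2 * (x.re ^ 2 + 1) = 0 := by
      linear_combination x.re^2 * h1 + (x.re*x.imI/2)*h2 + (x.re*x.imJ/2)*h3 + (x.re*x.imK/2)*h4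
    have h6 : x.re = 0 := by
      have h7 : x.re^2 = 0 := by
        rcases mul_eq_zero.mp h5 with h | h
        · exact h
        · nlinarith [sq_nonneg x.re]
      exact pow_eq_zero_iff (two_ne_zero) |>.mp h7
    refine ⟨h6, ?_⟩
    rw [normSq_expand]
    linear_combination -h1 + 2*x.re*h6
  · rintro ⟨h0, hn⟩
    rw [normSq_expand] at hn
    show x^2 = -1
    rw [sq]
    ext
    · simp only [Quaternion.re_mul, Quaternion.re_neg, Quaternion.re_one]
      linear_combination -hn + 2*x.re*h0
    · simp only [Quaternion.imI_mul, Quaternion.imI_neg, Quaternion.imI_one, neg_zero]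
      linear_combination (2*x.imI)*h0
    · simp only [Quaternion.imJ_mul, Quaternion.imJ_neg, Quaternion.imJ_one, neg_zero]
      linear_combination (2*x.imJ)*h0
    · simp only [Quaternion.imK_mul, Quaternion.imK_neg, Quaternion.imK_one, neg_zero]
      linear_combination (2*x.imK)*h0

lemma qip_mulmul (a p q : ℍ[ℝ]) : qip (a * p) (a * q) = normSq a * qip p q := by
  simp only [qip_expand, Quaternion.re_mul, Quaternion.imI_mul, Quaternion.imJ_mul,
    Quaternion.imK_mul, normSq_expand]
  ring

lemma qip_mul_expand (v h w : ℍ[ℝ]) :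
    qip (v*h) w = h.re * qip v w + h.imI * qip (v*qi) w + h.imJ * qip (v*qj) w
      + h.imK * qip (v*qk) w := by
  simp only [qip_expand, Quaternion.re_mul, Quaternion.imI_mul, Quaternion.imJ_mul,
    Quaternion.imK_mul, qi_re, qi_imI, qi_imJ, qi_imK, qj_re, qj_imI, qj_imJ, qj_imK, qk_re, qk_imI, qk_imJ, qk_imK]
  ring

lemma qip_smul_left (r : ℝ) (x y : ℍ[ℝ]) : qip (r • x) y = r * qip x y := by
  simp only [qip_expand, Quaternion.re_smul, Quaternion.imI_smul, Quaternion.imJ_smul,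
    Quaternion.imK_smul, smul_eq_mul]
  ring

lemma normSq_smul' (r : ℝ) (x : ℍ[ℝ]) : normSq (r • x) = r^2 * normSq x := by
  simp only [normSq_expand, Quaternion.re_smul, Quaternion.imI_smul, Quaternion.imJ_smul,
    Quaternion.imK_smul, smul_eq_mul]
  ring

lemma normSq_sub' (u v : ℍ[ℝ]) : normSq (u - v) = normSq u + normSq v - 2 * qip v u := by
  simp only [normSq_expand, qip_expand, Quaternion.re_sub, Quaternion.imI_sub,
    Quaternion.imJ_sub, Quaternion.imK_sub]
  ring

lemma Aform_smul (Λ : ℍ[ℝ] →ₗ[ℝ] ℍ[ℝ]) (r : ℝ) (p q : ℍ[ℝ]) :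
    Aform Λ (r • p) q = r * Aform Λ p q := by
  unfold Aform
  rw [mul_smul_comm, mul_smul_comm, mul_smul_comm, mul_smul_comm,
    qip_smul_left, qip_smul_left, qip_smul_left, qip_smul_left]
  ring

lemma Aform_im (Λ : ℍ[ℝ] →ₗ[ℝ] ℍ[ℝ]) (q h : ℍ[ℝ]) (hh0 : h.re = 0) :
    Aform Λ h q = h.imI * Aform Λ qi q + h.imJ * Aform Λ qj q + h.imK * Aform Λ qk q := by
  unfold Aform
  rw [qip_mul_expand (Λ 1) h, qip_mul_expand (Λ qi) h, qip_mul_expand (Λ qj) h,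
    qip_mul_expand (Λ qk) h, hh0]
  ring

lemma LLam_re (Λ : ℍ[ℝ] →ₗ[ℝ] ℍ[ℝ]) (q : ℍ[ℝ]) : (LLam Λ q).re = 0 := by
  simp [LLam]

lemma normSq_LLam (Λ : ℍ[ℝ] →ₗ[ℝ] ℍ[ℝ]) (q : ℍ[ℝ]) :
    normSq (LLam Λ q) = Aform Λ qi q^2 + Aform Λ qj q^2 + Aform Λ qk q^2 := by
  simp [LLam, normSq_expand]

lemma Aform_LLam (Λ : ℍ[ℝ] →ₗ[ℝ] ℍ[ℝ]) (q : ℍ[ℝ]) :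
    Aform Λ (LLam Λ q) q = normSq (LLam Λ q) := by
  rw [Aform_im Λ q _ (LLam_re Λ q), normSq_LLam]
  simp [LLam]
  ring

lemma hdecomp (x : ℍ[ℝ]) : x = x.re • (1:ℍ[ℝ]) + x.imI • qi + x.imJ • qj + x.imK • qk := by
  ext <;> simp

lemma normSqL_pos (Λ : ℍ[ℝ] →ₗ[ℝ] ℍ[ℝ]) (hΛ : Λ ≠ 0) : 0 < normSqL Λ := by
  have h0 : 0 ≤ normSqL Λ := by
    unfold normSqL
    have := Quaternion.normSq_nonneg (a := Λ 1)
    have := Quaternion.normSq_nonneg (a := Λ qi)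
    have := Quaternion.normSq_nonneg (a := Λ qj)
    have := Quaternion.normSq_nonneg (a := Λ qk)
    linarith
  rcases h0.lt_or_eq with h | h
  · exact h
  · exfalso; apply hΛ
    unfold normSqL at h
    have n1 := Quaternion.normSq_nonneg (a := Λ 1)
    have n2 := Quaternion.normSq_nonneg (a := Λ qi)
    have n3 := Quaternion.normSq_nonneg (a := Λ qj)
    have n4 := Quaternion.normSq_nonneg (a := Λ qk)
    have e1 : Λ 1 = 0 := by rw [← Quaternion.normSq_eq_zero]; linarith
    have e2 : Λ qi = 0 := by rw [← Quaternion.normSq_eq_zero]; linarith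
    have e3 : Λ qj = 0 := by rw [← Quaternion.normSq_eq_zero]; linarith
    have e4 : Λ qk = 0 := by rw [← Quaternion.normSq_eq_zero]; linarith
    apply LinearMap.ext
    intro w
    rw [show Λ w = w.re • Λ 1 + w.imI • Λ qi + w.imJ • Λ qj + w.imK • Λ qk by
      conv_lhs => rw [show w = w.re • (1:ℍ[ℝ]) + w.imI • qi + w.imJ • qj + w.imK • qk from hdecomp w]
      simp]
    simp [e1, e2, e3, e4]




set_option maxHeartbeats 2000000 in
/-- For a nonzero real linear map `Λ : ℍ → ℍ` and `g ∈ 𝕊`: `Q_Λ(g) ≤ ‖Λ‖⁴`, with equality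
iff `Λ` is complex linear of type `(g,h)` for some `h ∈ 𝕊`; moreover if `Λ` is complex
linear of type `(g,h)` then `L_Λ(g) = ‖Λ‖² h`, so such an `h` is unique. -/
theorem stmt1 (Λ : ℍ[ℝ] →ₗ[ℝ] ℍ[ℝ]) (hΛ : Λ ≠ 0) (g : ℍ[ℝ]) (hg : g ∈ sph) :
    QLam Λ g ≤ normSqL Λ ^ 2 ∧
    (QLam Λ g = normSqL Λ ^ 2 ↔ ∃ h ∈ sph, IsCLType Λ g h) ∧
    (∀ h ∈ sph, IsCLType Λ g h → LLam Λ g = normSqL Λ • h) ∧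
    (∀ h ∈ sph, ∀ h' ∈ sph, IsCLType Λ g h → IsCLType Λ g h' → h = h') := by
  obtain ⟨hg0, hgn⟩ := (mem_sph_iff g).mp hg
  have hN0 : 0 < normSqL Λ := normSqL_pos Λ hΛ
  -- decompositions of g * e
  have hg1 : g * 1 = g.imI • qi + g.imJ • qj + g.imK • qk := by
    ext <;> simp [hg0]
  have hgi : g * qi = (-g.imI) • (1:ℍ[ℝ]) + g.imK • qj + (-g.imJ) • qk := by
    ext <;> simp [Quaternion.re_mul, Quaternion.imI_mul, Quaternion.imJ_mul,
      Quaternion.imK_mul, hg0]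
  have hgj : g * qj = (-g.imJ) • (1:ℍ[ℝ]) + (-g.imK) • qi + g.imI • qk := by
    ext <;> simp [Quaternion.re_mul, Quaternion.imI_mul, Quaternion.imJ_mul,
      Quaternion.imK_mul, hg0]
  have hgk : g * qk = (-g.imK) • (1:ℍ[ℝ]) + g.imJ • qi + (-g.imI) • qj := by
    ext <;> simp [Quaternion.re_mul, Quaternion.imI_mul, Quaternion.imJ_mul,
      Quaternion.imK_mul, hg0]
  have hu1 : Λ (g * 1) = g.imI • Λ qi + g.imJ • Λ qj + g.imK • Λ qk := by
    rw [hg1]; simp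
  have hui : Λ (g * qi) = (-g.imI) • Λ 1 + g.imK • Λ qj + (-g.imJ) • Λ qk := by
    rw [hgi]; simp
  have huj : Λ (g * qj) = (-g.imJ) • Λ 1 + (-g.imK) • Λ qi + g.imI • Λ qk := by
    rw [hgj]; simp
  have huk : Λ (g * qk) = (-g.imK) • Λ 1 + g.imJ • Λ qi + (-g.imI) • Λ qj := by
    rw [hgk]; simp
  -- sum invariance
  have hgn' : g.re^2 + g.imI^2 + g.imJ^2 + g.imK^2 = 1 := by rw [← normSq_expand]; exact hgn
  have hsumg : normSq (Λ (g*1)) + normSq (Λ (g*qi)) + normSq (Λ (g*qj)) + normSq (Λ (g*qk))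
      = normSq (Λ 1) + normSq (Λ qi) + normSq (Λ qj) + normSq (Λ qk) := by
    rw [hu1, hui, huj, huk]
    simp only [normSq_expand, Quaternion.re_add, Quaternion.imI_add, Quaternion.imJ_add,
      Quaternion.imK_add, Quaternion.re_smul, Quaternion.imI_smul, Quaternion.imJ_smul,
      Quaternion.imK_smul, smul_eq_mul]
    linear_combination (((Λ 1).re^2+(Λ 1).imI^2+(Λ 1).imJ^2+(Λ 1).imK^2
      +(Λ qi).re^2+(Λ qi).imI^2+(Λ qi).imJ^2+(Λ qi).imK^2
      +(Λ qj).re^2+(Λ qj).imI^2+(Λ qj).imJ^2+(Λ qj).imK^2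
      +(Λ qk).re^2+(Λ qk).imI^2+(Λ qk).imJ^2+(Λ qk).imK^2)) * hgn'
      - (((Λ 1).re^2+(Λ 1).imI^2+(Λ 1).imJ^2+(Λ 1).imK^2
      +(Λ qi).re^2+(Λ qi).imI^2+(Λ qi).imJ^2+(Λ qi).imK^2
      +(Λ qj).re^2+(Λ qj).imI^2+(Λ qj).imJ^2+(Λ qj).imK^2
      +(Λ qk).re^2+(Λ qk).imI^2+(Λ qk).imJ^2+(Λ qk).imK^2) * g.re) * hg0
  -- the key identity
  have hSkey : ∀ h : ℍ[ℝ], h.re = 0 → normSq h = 1 →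
      normSq (Λ (g*1) - Λ 1 * h) + normSq (Λ (g*qi) - Λ qi * h)
        + normSq (Λ (g*qj) - Λ qj * h) + normSq (Λ (g*qk) - Λ qk * h)
      = 8 * normSqL Λ - 8 * Aform Λ h g := by
    intro h h0 h1
    rw [normSq_sub', normSq_sub', normSq_sub', normSq_sub']
    have m1 : normSq (Λ 1 * h) = normSq (Λ 1) := by rw [map_mul, h1, mul_one]
    have m2 : normSq (Λ qi * h) = normSq (Λ qi) := by rw [map_mul, h1, mul_one]
    have m3 : normSq (Λ qj * h) = normSq (Λ qj) := by rw [map_mul, h1, mul_one]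
    have m4 : normSq (Λ qk * h) = normSq (Λ qk) := by rw [map_mul, h1, mul_one]
    rw [m1, m2, m3, m4]
    unfold Aform normSqL
    linarith [hsumg]
  have hbound : ∀ h : ℍ[ℝ], h.re = 0 → normSq h = 1 → Aform Λ h g ≤ normSqL Λ := by
    intro h h0 h1
    have hk := hSkey h h0 h1
    have n1 := Quaternion.normSq_nonneg (a := Λ (g*1) - Λ 1 * h)
    have n2 := Quaternion.normSq_nonneg (a := Λ (g*qi) - Λ qi * h)
    have n3 := Quaternion.normSq_nonneg (a := Λ (g*qj) - Λ qj * h)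
    have n4 := Quaternion.normSq_nonneg (a := Λ (g*qk) - Λ qk * h)
    linarith
  -- third bullet : CLType ⟹ LLam = N • h
  have hLh : ∀ h ∈ sph, IsCLType Λ g h → LLam Λ g = normSqL Λ • h := by
    intro h hh hcl
    obtain ⟨hh0, hhn⟩ := (mem_sph_iff h).mp hh
    have hA : ∀ p : ℍ[ℝ], Aform Λ p g = normSqL Λ * qip p h := by
      intro p
      unfold Aform normSqL
      rw [hcl 1, hcl qi, hcl qj, hcl qk, qip_mulmul, qip_mulmul, qip_mulmul, qip_mulmul]
      ring
    unfold LLam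
    rw [hA qi, hA qj, hA qk]
    ext <;> simp [qip_expand, hh0] <;> ring
  -- converse of equality: CLType ⟹ QLam = N²
  have hQeq : ∀ h ∈ sph, IsCLType Λ g h → QLam Λ g = normSqL Λ ^ 2 := by
    intro h hh hcl
    obtain ⟨hh0, hhn⟩ := (mem_sph_iff h).mp hh
    unfold QLam
    rw [show LLam Λ g = normSqL Λ • h from hLh h hh hcl, normSq_smul', hhn, mul_one]
  -- inequality
  have hQle : QLam Λ g ≤ normSqL Λ ^ 2 := by
    rcases eq_or_ne (LLam Λ g) 0 with h0 | h0
    · unfold QLam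
      rw [h0]
      simp
      positivity
    · have hl0 : 0 < normSq (LLam Λ g) := by
        rcases (Quaternion.normSq_nonneg (a := LLam Λ g)).lt_or_eq with h | h
        · exact h
        · exact absurd (Quaternion.normSq_eq_zero.mp h.symm) h0
      set r := Real.sqrt (normSq (LLam Λ g)) with hrdef
      have hrpos : 0 < r := Real.sqrt_pos.mpr hl0
      have hr2 : r^2 = normSq (LLam Λ g) := Real.sq_sqrt hl0.le
      have h0' : (r⁻¹ • LLam Λ g).re = 0 := by
        simp [Quaternion.re_smul, LLam_re]
      have h1' : normSq (r⁻¹ • LLam Λ g) = 1 := by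
        rw [normSq_smul', ← hr2]
        field_simp
      have hb := hbound _ h0' h1'
      rw [Aform_smul, Aform_LLam, ← hr2] at hb
      have hrN : r ≤ normSqL Λ := by
        have : r⁻¹ * r^2 = r := by field_simp
        linarith [this ▸ hb]
      unfold QLam
      rw [← hr2]
      nlinarith
  refine ⟨hQle, ⟨?_, ?_⟩, hLh, ?_⟩
  · -- equality forward
    intro hEq
    have hl2 : normSq (LLam Λ g) = normSqL Λ ^ 2 := hEq
    set N := normSqL Λ with hNdef
    set h : ℍ[ℝ] := N⁻¹ • LLam Λ g with hdef
    have hh0 : h.re = 0 := by simp [hdef, Quaternion.re_smul, LLam_re]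
    have hh1 : normSq h = 1 := by
      rw [hdef, normSq_smul', hl2]
      field_simp
    have hAh : Aform Λ h g = N := by
      rw [hdef, Aform_smul, Aform_LLam, hl2]
      field_simp
    have hk := hSkey h hh0 hh1
    rw [hAh] at hk
    have n1 := Quaternion.normSq_nonneg (a := Λ (g*1) - Λ 1 * h)
    have n2 := Quaternion.normSq_nonneg (a := Λ (g*qi) - Λ qi * h)
    have n3 := Quaternion.normSq_nonneg (a := Λ (g*qj) - Λ qj * h)
    have n4 := Quaternion.normSq_nonneg (a := Λ (g*qk) - Λ qk * h)
    have z1 : Λ (g*1) = Λ 1 * h := by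
      have : normSq (Λ (g*1) - Λ 1 * h) = 0 := by linarith
      exact sub_eq_zero.mp (Quaternion.normSq_eq_zero.mp this)
    have z2 : Λ (g*qi) = Λ qi * h := by
      have : normSq (Λ (g*qi) - Λ qi * h) = 0 := by linarith
      exact sub_eq_zero.mp (Quaternion.normSq_eq_zero.mp this)
    have z3 : Λ (g*qj) = Λ qj * h := by
      have : normSq (Λ (g*qj) - Λ qj * h) = 0 := by linarith
      exact sub_eq_zero.mp (Quaternion.normSq_eq_zero.mp this)
    have z4 : Λ (g*qk) = Λ qk * h := by
      have : normSq (Λ (g*qk) - Λ qk * h) = 0 := by linarith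
      exact sub_eq_zero.mp (Quaternion.normSq_eq_zero.mp this)
    refine ⟨h, (mem_sph_iff h).mpr ⟨hh0, hh1⟩, ?_⟩
    intro x
    have hxd : g * x = x.re • (g*1) + x.imI • (g*qi) + x.imJ • (g*qj) + x.imK • (g*qk) := by
      ext <;> simp [Quaternion.re_mul, Quaternion.imI_mul, Quaternion.imJ_mul,
        Quaternion.imK_mul] <;> ring
    rw [hxd, map_add, map_add, map_add, map_smul, map_smul, map_smul, map_smul, z1, z2, z3, z4]
    conv_rhs => rw [show x = x.re • (1:ℍ[ℝ]) + x.imI • qi + x.imJ • qj + x.imK • qk from hdecomp x]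
    rw [map_add, map_add, map_add, map_smul, map_smul, map_smul, map_smul]
    rw [add_mul, add_mul, add_mul, smul_mul_assoc, smul_mul_assoc, smul_mul_assoc, smul_mul_assoc]
  · -- equality backwards
    rintro ⟨h, hh, hcl⟩
    exact hQeq h hh hcl
  · -- uniqueness
    intro h hh h' hh' hcl hcl'
    have e1 := hLh h hh hcl
    have e2 := hLh h' hh' hcl'
    have : normSqL Λ • h = normSqL Λ • h' := by rw [← e1, ← e2]
    exact smul_right_injective ℍ[ℝ] hN0.ne' this

end
end

section
/- For every ℝ-linear map Λ : ℍ → ℍ, the trace of the bilinear form A_Λ satisfies tr(A_Λ) = ‖Λ‖² − (1/4)·|Λ(1)·1 + Λ(i)·i + Λ(j)·j + Λ(k)·k|². -/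
noncomputable section

open Quaternion Classical

lemma key_stmt2 (a b c d : ℍ[ℝ]) :
    ((1/4 : ℝ) * (qip (a*qi) b + qip (b*qi) (-a) + qip (c*qi) d + qip (d*qi) (-c))
    + (1/4) * (qip (a*qj) c + qip (b*qj) (-d) + qip (c*qj) (-a) + qip (d*qj) b)
    + (1/4) * (qip (a*qk) d + qip (b*qk) c + qip (c*qk) (-b) + qip (d*qk) (-a)))
    = (1/4) * (normSq a + normSq b + normSq c + normSq d)
      - (1/4) * normSq (a * 1 + b * qi + c * qj + d * qk) := by
  simp only [qip, Quaternion.normSq_def', Quaternion.re_mul, Quaternion.imI_mul,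
    Quaternion.imJ_mul, Quaternion.imK_mul, Quaternion.re_add, Quaternion.imI_add,
    Quaternion.imJ_add, Quaternion.imK_add, Quaternion.re_star, Quaternion.imI_star,
    Quaternion.imJ_star, Quaternion.imK_star, Quaternion.re_neg, Quaternion.imI_neg,
    Quaternion.imJ_neg, Quaternion.imK_neg, Quaternion.re_one, Quaternion.imI_one,
    Quaternion.imJ_one, Quaternion.imK_one]
  obtain ⟨a1,a2,a3,a4⟩ := a
  obtain ⟨b1,b2,b3,b4⟩ := b
  obtain ⟨c1,c2,c3,c4⟩ := c
  obtain ⟨d1,d2,d3,d4⟩ := d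
  simp [qip, qi, qj, qk, Quaternion.normSq_def', Quaternion.re_mul, Quaternion.imI_mul,
    Quaternion.imJ_mul, Quaternion.imK_mul]
  ring

/-- `tr(A_Λ) = ‖Λ‖² − (1/4)|Λ(1)·1 + Λ(i)·i + Λ(j)·j + Λ(k)·k|²`. -/
theorem stmt2 (Λ : ℍ[ℝ] →ₗ[ℝ] ℍ[ℝ]) :
    trA Λ = normSqL Λ
      - (1 / 4) * normSq (Λ 1 * 1 + Λ qi * qi + Λ qj * qj + Λ qk * qk) := by

  have hii : qi * qi = -1 := by ext <;> simp [Quaternion.re_mul, Quaternion.imI_mul, Quaternion.imJ_mul, Quaternion.imK_mul] <;> simp [qi]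
  have hjj : qj * qj = -1 := by ext <;> simp [Quaternion.re_mul, Quaternion.imI_mul, Quaternion.imJ_mul, Quaternion.imK_mul] <;> simp [qj]
  have hkk : qk * qk = -1 := by ext <;> simp [Quaternion.re_mul, Quaternion.imI_mul, Quaternion.imJ_mul, Quaternion.imK_mul] <;> simp [qk]
  have hij : qi * qj = qk := by ext <;> simp [Quaternion.re_mul, Quaternion.imI_mul, Quaternion.imJ_mul, Quaternion.imK_mul] <;> simp [qi, qj, qk]
  have hji : qj * qi = -qk := by ext <;> simp [Quaternion.re_mul, Quaternion.imI_mul, Quaternion.imJ_mul, Quaternion.imK_mul] <;> simp [qi, qj, qk]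
  have hik : qi * qk = -qj := by ext <;> simp [Quaternion.re_mul, Quaternion.imI_mul, Quaternion.imJ_mul, Quaternion.imK_mul] <;> simp [qi, qj, qk]
  have hki : qk * qi = qj := by ext <;> simp [Quaternion.re_mul, Quaternion.imI_mul, Quaternion.imJ_mul, Quaternion.imK_mul] <;> simp [qi, qj, qk]
  have hjk : qj * qk = qi := by ext <;> simp [Quaternion.re_mul, Quaternion.imI_mul, Quaternion.imJ_mul, Quaternion.imK_mul] <;> simp [qi, qj, qk]
  have hkj : qk * qj = -qi := by ext <;> simp [Quaternion.re_mul, Quaternion.imI_mul, Quaternion.imJ_mul, Quaternion.imK_mul] <;> simp [qi, qj, qk]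
  have e := key_stmt2 (Λ 1) (Λ qi) (Λ qj) (Λ qk)
  simp only [trA, Aform, normSqL, mul_one, hii, hjj, hkk, hij, hji, hik, hki, hjk, hkj,
    map_neg] at *
  linarith [e]


end
end

section
/- An ℝ-linear map Λ : ℍ → ℍ is regular if and only if tr(A_Λ) = ‖Λ‖². -/
noncomputable section

open Quaternion Classical

lemma qi_mul_qi : qi * qi = -1 := by ext <;> simp only [Quaternion.re_mul, Quaternion.imI_mul, Quaternion.imJ_mul, Quaternion.imK_mul, Quaternion.re_neg, Quaternion.imI_neg, Quaternion.imJ_neg, Quaternion.imK_neg] <;> simp [qi]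
lemma qi_mul_qj : qi * qj = qk := by ext <;> simp only [Quaternion.re_mul, Quaternion.imI_mul, Quaternion.imJ_mul, Quaternion.imK_mul, Quaternion.re_neg, Quaternion.imI_neg, Quaternion.imJ_neg, Quaternion.imK_neg] <;> simp [qi, qj, qk]
lemma qj_mul_qi : qj * qi = -qk := by ext <;> simp only [Quaternion.re_mul, Quaternion.imI_mul, Quaternion.imJ_mul, Quaternion.imK_mul, Quaternion.re_neg, Quaternion.imI_neg, Quaternion.imJ_neg, Quaternion.imK_neg] <;> simp [qi, qj, qk]
lemma qj_mul_qj : qj * qj = -1 := by ext <;> simp only [Quaternion.re_mul, Quaternion.imI_mul, Quaternion.imJ_mul, Quaternion.imK_mul, Quaternion.re_neg, Quaternion.imI_neg, Quaternion.imJ_neg, Quaternion.imK_neg] <;> simp [qj]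
lemma qj_mul_qk : qj * qk = qi := by ext <;> simp only [Quaternion.re_mul, Quaternion.imI_mul, Quaternion.imJ_mul, Quaternion.imK_mul, Quaternion.re_neg, Quaternion.imI_neg, Quaternion.imJ_neg, Quaternion.imK_neg] <;> simp [qi, qj, qk]
lemma qk_mul_qj : qk * qj = -qi := by ext <;> simp only [Quaternion.re_mul, Quaternion.imI_mul, Quaternion.imJ_mul, Quaternion.imK_mul, Quaternion.re_neg, Quaternion.imI_neg, Quaternion.imJ_neg, Quaternion.imK_neg] <;> simp [qi, qj, qk]
lemma qk_mul_qk : qk * qk = -1 := by ext <;> simp only [Quaternion.re_mul, Quaternion.imI_mul, Quaternion.imJ_mul, Quaternion.imK_mul, Quaternion.re_neg, Quaternion.imI_neg, Quaternion.imJ_neg, Quaternion.imK_neg] <;> simp [qk]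
lemma qk_mul_qi : qk * qi = qj := by ext <;> simp only [Quaternion.re_mul, Quaternion.imI_mul, Quaternion.imJ_mul, Quaternion.imK_mul, Quaternion.re_neg, Quaternion.imI_neg, Quaternion.imJ_neg, Quaternion.imK_neg] <;> simp [qi, qj, qk]
lemma qi_mul_qk : qi * qk = -qj := by ext <;> simp only [Quaternion.re_mul, Quaternion.imI_mul, Quaternion.imJ_mul, Quaternion.imK_mul, Quaternion.re_neg, Quaternion.imI_neg, Quaternion.imJ_neg, Quaternion.imK_neg] <;> simp [qi, qj, qk]

lemma key (Λ : ℍ[ℝ] →ₗ[ℝ] ℍ[ℝ]) :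
    normSqL Λ - trA Λ
      = (1/4) * normSq (Λ 1 + Λ qi * qi + Λ qj * qj + Λ qk * qk) := by
  simp only [trA, Aform, qip, normSqL, mul_one, one_mul,
    qi_mul_qi, qi_mul_qj, qj_mul_qi, qj_mul_qj, qj_mul_qk, qk_mul_qj,
    qk_mul_qk, qk_mul_qi, qi_mul_qk, map_neg, map_one]
  simp only [Quaternion.normSq_def', Quaternion.re_mul, Quaternion.imI_mul, Quaternion.imJ_mul, Quaternion.imK_mul, Quaternion.re_neg, Quaternion.imI_neg, Quaternion.imJ_neg, Quaternion.imK_neg, Quaternion.re_add, Quaternion.imI_add,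
    Quaternion.imJ_add, Quaternion.imK_add, Quaternion.re_star, Quaternion.imI_star, Quaternion.imJ_star,
    Quaternion.imK_star]
  obtain ⟨a1,a2,a3,a4⟩ := Λ 1
  obtain ⟨b1,b2,b3,b4⟩ := Λ qi
  obtain ⟨c1,c2,c3,c4⟩ := Λ qj
  obtain ⟨d1,d2,d3,d4⟩ := Λ qk
  simp [Quaternion.normSq_def', qi, qj, qk, Quaternion.re_mul,
    Quaternion.imI_mul, Quaternion.imJ_mul, Quaternion.imK_mul]
  ring

/-- A real linear map `Λ : ℍ → ℍ` is regular if and only if `tr(A_Λ) = ‖Λ‖²`. -/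
theorem stmt3 (Λ : ℍ[ℝ] →ₗ[ℝ] ℍ[ℝ]) : IsReg Λ ↔ trA Λ = normSqL Λ := by
  have h := key Λ
  constructor
  · intro hr
    unfold IsReg at hr
    rw [mul_one] at hr
    rw [hr] at h
    simp at h
    linarith
  · intro he
    unfold IsReg
    rw [mul_one]
    rw [he, sub_self] at h
    have h0 : normSq (Λ 1 + Λ qi * qi + Λ qj * qj + Λ qk * qk) = 0 := by linarith
    exact Quaternion.normSq_eq_zero.mp h0

end
end

section
/- If an ℝ-linear map Λ : ℍ → ℍ is complex linear of type (g,g) for some g ∈ 𝕊, then Λ is regular. -/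
noncomputable section

open Quaternion Classical

/-- If a real linear map `Λ : ℍ → ℍ` is complex linear of type `(g,g)` for some `g ∈ 𝕊`,
then `Λ` is regular. -/
theorem stmt6 (Λ : ℍ[ℝ] →ₗ[ℝ] ℍ[ℝ]) (g : ℍ[ℝ]) (hg : g ∈ sph)
    (h : IsCLType Λ g g) : IsReg Λ := by
  have hg2 : g * g = -1 := by
    have := hg
    simp only [sph, Set.mem_setOf_eq, sq] at this
    exact this
  rw [Quaternion.ext_iff] at hg2
  simp only [Quaternion.re_mul, Quaternion.imI_mul, Quaternion.imJ_mul, Quaternion.imK_mul,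
    Quaternion.re_neg, Quaternion.imI_neg, Quaternion.imJ_neg, Quaternion.imK_neg,
    Quaternion.re_one, Quaternion.imI_one, Quaternion.imJ_one, Quaternion.imK_one] at hg2
  obtain ⟨q0, q1, q2, q3⟩ := hg2
  have h3 : g.re * (g.re ^ 2 + 1) = 0 := by
    linear_combination g.re * q0 + (g.imI / 2) * q1 + (g.imJ / 2) * q2 + (g.imK / 2) * q3
  have hre : g.re = 0 := by
    rcases mul_eq_zero.mp h3 with h' | h'
    · exact h'
    · nlinarith [sq_nonneg g.re]
  have hs : g.imI ^ 2 + g.imJ ^ 2 + g.imK ^ 2 = 1 := by nlinarith [q0, hre]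
  have hdecomp : ∀ q : ℍ[ℝ], Λ q = q.re • Λ 1 + q.imI • Λ qi + q.imJ • Λ qj + q.imK • Λ qk := by
    intro q
    have hq : q = q.re • (1:ℍ[ℝ]) + q.imI • qi + q.imJ • qj + q.imK • qk := by
      ext <;> simp [Quaternion.re_smul] <;> simp [qi, qj, qk]
    conv_lhs => rw [hq]
    simp [map_add, map_smul]
  have e1 := h 1
  have e2 := h qi
  have e3 := h qj
  have e4 := h qk
  rw [mul_one, hdecomp g] at e1
  set A := Λ 1 with hA
  set B := Λ qi with hB
  set C := Λ qj with hC
  set D := Λ qk with hD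
  rw [hdecomp (g * qi)] at e2
  rw [hdecomp (g * qj)] at e3
  rw [hdecomp (g * qk)] at e4
  rw [Quaternion.ext_iff] at e1 e2 e3 e4
  simp only [Quaternion.re_mul, Quaternion.imI_mul, Quaternion.imJ_mul, Quaternion.imK_mul] at e1 e2 e3 e4
  simp only [qi, qj, qk, Quaternion.re_mul, Quaternion.imI_mul, Quaternion.imJ_mul,
    Quaternion.imK_mul, Quaternion.re_add, Quaternion.imI_add, Quaternion.imJ_add,
    Quaternion.imK_add, Quaternion.re_smul, Quaternion.imI_smul, Quaternion.imJ_smul,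
    Quaternion.imK_smul, Quaternion.re_one, Quaternion.imI_one, Quaternion.imJ_one,
    Quaternion.imK_one, hre, smul_eq_mul, mul_zero, zero_mul, mul_one, one_mul,
    add_zero, zero_add, neg_zero, mul_neg, neg_neg, sub_zero, zero_sub] at e1 e2 e3 e4
  obtain ⟨a0, a1, a2, a3⟩ := e1
  obtain ⟨b0, b1, b2, b3⟩ := e2
  obtain ⟨c0, c1, c2, c3⟩ := e3
  obtain ⟨d0, d1, d2, d3⟩ := e4
  unfold IsReg
  rw [← hA, ← hB, ← hC, ← hD, Quaternion.ext_iff]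
  simp only [Quaternion.re_add, Quaternion.imI_add, Quaternion.imJ_add, Quaternion.imK_add,
    Quaternion.re_mul, Quaternion.imI_mul, Quaternion.imJ_mul, Quaternion.imK_mul]
  simp only [qi, qj, qk, Quaternion.re_mul, Quaternion.imI_mul, Quaternion.imJ_mul,
    Quaternion.imK_mul, Quaternion.re_add, Quaternion.imI_add, Quaternion.imJ_add,
    Quaternion.imK_add, Quaternion.re_one, Quaternion.imI_one, Quaternion.imJ_one,
    Quaternion.imK_one, Quaternion.re_zero, Quaternion.imI_zero, Quaternion.imJ_zero,
    Quaternion.imK_zero, mul_zero, zero_mul, mul_one, one_mul,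
    add_zero, zero_add, neg_zero, mul_neg, neg_neg, sub_zero, zero_sub]
  refine ⟨?_, ?_, ?_, ?_⟩
  · linear_combination (-g.imI)*((3/2)*a1 - (1/2)*b0 + (1/2)*c3 - (1/2)*d2) + (-g.imJ)*((3/2)*a2 - (1/2)*b3 - (1/2)*c0 + (1/2)*d1) + (-g.imK)*((3/2)*a3 + (1/2)*b2 - (1/2)*c1 - (1/2)*d0) + (-(A.re - B.imI - C.imJ - D.imK))*hs
  · linear_combination (g.imI)*((3/2)*a0 + (1/2)*b1 + (1/2)*c2 + (1/2)*d3) + (g.imK)*((3/2)*a2 - (1/2)*b3 - (1/2)*c0 + (1/2)*d1) + (-g.imJ)*((3/2)*a3 + (1/2)*b2 - (1/2)*c1 - (1/2)*d0) + (-(A.imI + B.re - C.imK + D.imJ))*hs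
  · linear_combination (g.imJ)*((3/2)*a0 + (1/2)*b1 + (1/2)*c2 + (1/2)*d3) + (g.imI)*((3/2)*a3 + (1/2)*b2 - (1/2)*c1 - (1/2)*d0) + (-g.imK)*((3/2)*a1 - (1/2)*b0 + (1/2)*c3 - (1/2)*d2) + (-(A.imJ + B.imK + C.re - D.imI))*hs
  · linear_combination (g.imK)*((3/2)*a0 + (1/2)*b1 + (1/2)*c2 + (1/2)*d3) + (g.imJ)*((3/2)*a1 - (1/2)*b0 + (1/2)*c3 - (1/2)*d2) + (-g.imI)*((3/2)*a2 - (1/2)*b3 - (1/2)*c0 + (1/2)*d1) + (-(A.imK - B.imJ + C.imI + D.re))*hs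


end
end

section
/- Let Λ : ℍ → ℍ be a regular ℝ-linear map and let g ∈ 𝕊. Then Λ is complex linear of type (g,g) if and only if M_Λ(g,g) = 0. -/
noncomputable section

open Quaternion Classical

set_option maxHeartbeats 2000000 in
/-- For a regular real linear map `Λ` and `g ∈ 𝕊`, `Λ` is complex linear of type `(g,g)`
if and only if `M_Λ(g,g) = 0`. -/
theorem stmt7 (Λ : ℍ[ℝ] →ₗ[ℝ] ℍ[ℝ]) (hreg : IsReg Λ) (g : ℍ[ℝ]) (hg : g ∈ sph) :
    IsCLType Λ g g ↔ Mform Λ g g = 0 := by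
  have hdec : ∀ x : ℍ[ℝ], Λ x = x.re • Λ 1 + x.imI • Λ qi + x.imJ • Λ qj + x.imK • Λ qk := by
    intro x
    have hx : x = x.re • 1 + x.imI • qi + x.imJ • qj + x.imK • qk := by
      ext <;> simp [Quaternion.re_smul] <;> simp [qi, qj, qk]
    conv_lhs => rw [hx]
    simp [map_add, map_smul]
  have hg' : g ^ 2 = -1 := hg
  rw [sq, Quaternion.ext_iff] at hg'
  simp only [Quaternion.re_mul, Quaternion.imI_mul, Quaternion.imJ_mul, Quaternion.imK_mul,
    Quaternion.re_neg, Quaternion.imI_neg, Quaternion.imJ_neg, Quaternion.imK_neg,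
    Quaternion.re_one, Quaternion.imI_one, Quaternion.imJ_one, Quaternion.imK_one] at hg'
  obtain ⟨e1, e2, e3, e4⟩ := hg'
  have h0 : g.re = 0 := by
    nlinarith [sq_nonneg g.re, sq_nonneg g.imI, sq_nonneg g.imJ, sq_nonneg g.imK]
  have key : normSq (Λ (g * 1) - Λ 1 * g) + normSq (Λ (g * qi) - Λ qi * g)
      + normSq (Λ (g * qj) - Λ qj * g) + normSq (Λ (g * qk) - Λ qk * g)
      = 16 * Mform Λ g g := by
    have h := hreg
    unfold IsReg at h
    rw [mul_one] at h
    have h2 : Λ 1 + (Λ qi * qi + (Λ qj * qj + Λ qk * qk)) = 0 := by rw [← h]; abel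
    have hA1 : Λ 1 = -(Λ qi * qi + (Λ qj * qj + Λ qk * qk)) := eq_neg_of_add_eq_zero_left h2
    unfold Mform trA Aform qip
    rw [hdec (g * 1), hdec (g * qi), hdec (g * qj), hdec (g * qk),
      hdec (qi * 1), hdec (qi * qi), hdec (qi * qj), hdec (qi * qk),
      hdec (qj * 1), hdec (qj * qi), hdec (qj * qj), hdec (qj * qk),
      hdec (qk * 1), hdec (qk * qi), hdec (qk * qj), hdec (qk * qk)]
    rw [hA1]
    generalize Λ qi = Ai
    generalize Λ qj = Aj
    generalize Λ qk = Ak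
    simp only [Quaternion.normSq_def', Quaternion.re_mul, Quaternion.imI_mul,
      Quaternion.imJ_mul, Quaternion.imK_mul, Quaternion.re_add, Quaternion.imI_add,
      Quaternion.imJ_add, Quaternion.imK_add, Quaternion.re_sub, Quaternion.imI_sub,
      Quaternion.imJ_sub, Quaternion.imK_sub, Quaternion.re_neg, Quaternion.imI_neg,
      Quaternion.imJ_neg, Quaternion.imK_neg, Quaternion.re_smul, Quaternion.imI_smul,
      Quaternion.imJ_smul, Quaternion.imK_smul, Quaternion.re_one, Quaternion.imI_one,
      Quaternion.imJ_one, Quaternion.imK_one, Quaternion.re_star, Quaternion.imI_star,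
      Quaternion.imJ_star, Quaternion.imK_star, smul_eq_mul]
    obtain ⟨a0, a1, a2, a3⟩ := Ai
    obtain ⟨b0, b1, b2, b3⟩ := Aj
    obtain ⟨c0, c1, c2, c3⟩ := Ak
    obtain ⟨g0, g1, g2, g3⟩ := g
    simp only [QuaternionAlgebra.re] at h0
    subst h0
    simp only [qi, qj, qk, Quaternion.normSq_def', Quaternion.re_mul, Quaternion.imI_mul,
      Quaternion.imJ_mul, Quaternion.imK_mul, Quaternion.re_add, Quaternion.imI_add,
      Quaternion.imJ_add, Quaternion.imK_add, Quaternion.re_sub, Quaternion.imI_sub,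
      Quaternion.imJ_sub, Quaternion.imK_sub, Quaternion.re_neg, Quaternion.imI_neg,
      Quaternion.imJ_neg, Quaternion.imK_neg, Quaternion.re_smul, Quaternion.imI_smul,
      Quaternion.imJ_smul, Quaternion.imK_smul, Quaternion.re_one, Quaternion.imI_one,
      Quaternion.imJ_one, Quaternion.imK_one, Quaternion.re_star, Quaternion.imI_star,
      Quaternion.imJ_star, Quaternion.imK_star, smul_eq_mul]
    ring
  constructor
  · intro hcl
    have z1 := hcl 1
    have z2 := hcl qi
    have z3 := hcl qj
    have z4 := hcl qk
    rw [z1, z2, z3, z4] at key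
    simp at key
    linarith
  · intro hM
    rw [hM] at key
    have n1 := Quaternion.normSq_nonneg (a := Λ (g * 1) - Λ 1 * g)
    have n2 := Quaternion.normSq_nonneg (a := Λ (g * qi) - Λ qi * g)
    have n3 := Quaternion.normSq_nonneg (a := Λ (g * qj) - Λ qj * g)
    have n4 := Quaternion.normSq_nonneg (a := Λ (g * qk) - Λ qk * g)
    have z1 : Λ (g * 1) = Λ 1 * g :=
      sub_eq_zero.mp (Quaternion.normSq_eq_zero.mp (by linarith))
    have z2 : Λ (g * qi) = Λ qi * g :=
      sub_eq_zero.mp (Quaternion.normSq_eq_zero.mp (by linarith))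
    have z3 : Λ (g * qj) = Λ qj * g :=
      sub_eq_zero.mp (Quaternion.normSq_eq_zero.mp (by linarith))
    have z4 : Λ (g * qk) = Λ qk * g :=
      sub_eq_zero.mp (Quaternion.normSq_eq_zero.mp (by linarith))
    intro x
    calc Λ (g * x)
        = x.re • Λ (g * 1) + x.imI • Λ (g * qi) + x.imJ • Λ (g * qj) + x.imK • Λ (g * qk) := by
          have hgx : g * x = x.re • (g * 1) + x.imI • (g * qi) + x.imJ • (g * qj)
              + x.imK • (g * qk) := by
            conv_lhs => rw [show x = x.re • 1 + x.imI • qi + x.imJ • qj + x.imK • qk from by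
              ext <;> simp [Quaternion.re_smul] <;> simp [qi, qj, qk]]
            simp [mul_add, mul_smul_comm]
          rw [hgx]
          simp [map_add, map_smul]
      _ = (x.re • Λ 1 + x.imI • Λ qi + x.imJ • Λ qj + x.imK • Λ qk) * g := by
          rw [z1, z2, z3, z4]
          simp [add_mul, smul_mul_assoc]
      _ = Λ x * g := by rw [← hdec x]


end
end

section
/- Let e₁ ∈ 𝕊, let λ₁ ∈ ℍ \ {0}, and let Λ := λ₁·θ̄_{e₁} (a regular ℝ-linear map of size 1). Then for all g, h ∈ 𝕊, Λ is complex linear of type (g,h) if and only if h = e₁·g·e₁ (which equals θ̄_{e₁}(g)). Moreover, e₁·g·e₁ = g if and only if ⟨g, e₁⟩ = 0. -/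
noncomputable section

open Quaternion Classical

lemma sph_re' {x : ℍ[ℝ]} (h : x ∈ sph) : x.re = 0 := by
  have h' := h
  simp only [sph, Set.mem_setOf_eq, sq, Quaternion.ext_iff] at h'
  obtain ⟨h1, h2, h3, h4⟩ := h'
  simp [Quaternion.re_mul, Quaternion.imI_mul, Quaternion.imJ_mul, Quaternion.imK_mul] at h1 h2 h3 h4
  nlinarith [sq_nonneg x.re, sq_nonneg x.imI, sq_nonneg x.imJ, sq_nonneg x.imK]

lemma sph_star' {x : ℍ[ℝ]} (h : x ∈ sph) : star x = -x := by
  have := sph_re' h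
  ext <;> simp [this]

lemma sph_inv' {x : ℍ[ℝ]} (h : x ∈ sph) : x⁻¹ = -x := by
  have hx : x * (-x) = 1 := by
    have : x * x = -1 := by rw [← sq]; exact h
    rw [mul_neg, this, neg_neg]
  exact inv_eq_of_mul_eq_one_right hx

/-- A regular real linear map `Λ = λ₁ θ̄_{e₁}` of size `1`: for `g, h ∈ 𝕊`, `Λ` is complex
linear of type `(g,h)` iff `h = e₁ g e₁ = θ̄_{e₁}(g)`; and `e₁ g e₁ = g` iff `g ⊥ e₁`. -/
theorem stmt11 (e₁ : ℍ[ℝ]) (he : e₁ ∈ sph) (l₁ : ℍ[ℝ]) (hl : l₁ ≠ 0)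
    (Λ : ℍ[ℝ] →ₗ[ℝ] ℍ[ℝ]) (hΛ : Λ = (lmul l₁).comp (thetaBar e₁)) :
    ∀ g ∈ sph, ∀ h ∈ sph,
      (IsCLType Λ g h ↔ h = e₁ * g * e₁) ∧ thetaBar e₁ g = e₁ * g * e₁ ∧
      (e₁ * g * e₁ = g ↔ qip g e₁ = 0) := by
  intro g hg h hh
  have hme : e₁ * e₁ = -1 := by rw [← sq]; exact he
  have hme2 : ∀ b : ℍ[ℝ], e₁ * (e₁ * b) = -b := by
    intro b; rw [← mul_assoc, hme, neg_one_mul]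
  have hse : star e₁ = -e₁ := sph_star' he
  have hsg : star g = -g := sph_star' hg
  have hie : e₁⁻¹ = -e₁ := sph_inv' he
  have happ : ∀ x : ℍ[ℝ], Λ x = l₁ * (e₁ * star x * e₁⁻¹) := by
    intro x; rw [hΛ]; rfl
  have hth : thetaBar e₁ g = e₁ * g * e₁ := by
    show e₁ * star g * e₁⁻¹ = _
    rw [hsg, hie]
    simp [mul_neg, neg_mul, neg_neg]
  refine ⟨?_, hth, ?_⟩
  · constructor
    · intro H
      have h1 := H 1
      rw [mul_one, happ, happ, hsg, hie, star_one] at h1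
      simp only [mul_one, mul_neg, neg_mul, neg_neg, hme] at h1
      exact (mul_left_cancel₀ hl h1).symm
    · intro hh' x
      rw [happ, happ, star_mul, hsg, hie, hh']
      simp only [mul_neg, neg_mul, neg_neg, mul_assoc, hme2]
  · have hgre := sph_re' hg
    have here := sph_re' he
    have hsum : e₁ * g + g * e₁ = ((-2 * qip g e₁ : ℝ) : ℍ[ℝ]) := by
      ext <;>
        simp [qip, Quaternion.re_mul, Quaternion.imI_mul, Quaternion.imJ_mul,
          Quaternion.imK_mul, hgre, here] <;> ring
    constructor
    · intro hgeq
      have h4 : g * e₁ = -(e₁ * g) := by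
        conv_lhs => rw [← hgeq]
        rw [mul_assoc (e₁ * g), hme]
        simp
      have h3 : e₁ * g + g * e₁ = 0 := by rw [h4]; simp
      have h5 : ((-2 * qip g e₁ : ℝ) : ℍ[ℝ]) = 0 := by rw [← hsum, h3]
      have h6 := congrArg QuaternionAlgebra.re h5
      simp at h6
      linarith
    · intro hq
      rw [hq] at hsum
      simp at hsum
      have h3 : e₁ * g = -(g * e₁) := eq_neg_of_add_eq_zero_left hsum
      rw [h3, neg_mul, mul_assoc, hme]
      simp


end
end

section
/- For every ℝ-linear map Λ : ℍ → ℍ there exist unique quaternions m₁, m₂, n₁, n₂ ∈ ℍ such that Λ(ι(z₁) + ι(z₂)·j) = m₁·ι(z₁) + m₂·ι(z₂) + n₁·ι(conj(z₁)) + n₂·ι(conj(z₂)) for all z₁, z₂ ∈ ℂ. Moreover, (1/4)·(Λ(1)·1 + Λ(i)·i + Λ(j)·j + Λ(k)·k) = (1/2)·(n₁ + n₂·j); in particular, Λ is regular if and only if n₂ = n₁·j. -/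
noncomputable section

open Quaternion Classical

@[simp] lemma iotaC_re (z : ℂ) : (iotaC z).re = z.re := rfl
@[simp] lemma iotaC_imI (z : ℂ) : (iotaC z).imI = z.im := rfl
@[simp] lemma iotaC_imJ (z : ℂ) : (iotaC z).imJ = 0 := rfl
@[simp] lemma iotaC_imK (z : ℂ) : (iotaC z).imK = 0 := rfl

lemma iotaC_decomp (z₁ z₂ : ℂ) :
    iotaC z₁ + iotaC z₂ * qj = z₁.re • (1 : ℍ[ℝ]) + z₁.im • qi + z₂.re • qj + z₂.im • qk := by
  ext <;> simp [Quaternion.re_mul, Quaternion.imI_mul, Quaternion.imJ_mul, Quaternion.imK_mul] <;> ring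

lemma iotaC_one : iotaC 1 = 1 := by ext <;> simp [iotaC]
lemma iotaC_zero : iotaC 0 = 0 := by ext <;> simp [iotaC]
lemma iotaC_I : iotaC Complex.I = qi := by ext <;> simp [iotaC, qi]
lemma iotaC_negI : iotaC (-Complex.I) = -qi := by ext <;> simp

lemma reg_aux (A B C D : ℍ[ℝ]) :
    (1/4 : ℝ) • (A * 1 + B * qi + C * qj + D * qk)
      = (1/2 : ℝ) • ((1/2 : ℝ) • (A + B * qi) + ((1/2 : ℝ) • (C + D * qi)) * qj) := by
  ext <;> simp [Quaternion.re_mul, Quaternion.imI_mul, Quaternion.imJ_mul, Quaternion.imK_mul, mul_comm, mul_left_comm] <;> ring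

lemma key_aux (A B C D : ℍ[ℝ]) :
    (1/2 : ℝ) • (C + D * qi) - ((1/2 : ℝ) • (A + B * qi)) * qj
      = (1/2 : ℝ) • ((A * 1 + B * qi + C * qj + D * qk) * (-qj)) := by
  ext <;> simp [Quaternion.re_mul, Quaternion.imI_mul, Quaternion.imJ_mul, Quaternion.imK_mul, mul_comm, mul_left_comm] <;> ring

set_option maxHeartbeats 1000000 in
/-- Every real linear map `Λ : ℍ → ℍ` admits unique `m₁, m₂, n₁, n₂ ∈ ℍ` with
`Λ(ι(z₁) + ι(z₂)j) = m₁ ι(z₁) + m₂ ι(z₂) + n₁ ι(z̄₁) + n₂ ι(z̄₂)`; moreover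
`(1/4)(Λ(1)·1 + Λ(i)·i + Λ(j)·j + Λ(k)·k) = (1/2)(n₁ + n₂ j)`, so `Λ` is regular iff
`n₂ = n₁ j`. -/
theorem stmt16 (Λ : ℍ[ℝ] →ₗ[ℝ] ℍ[ℝ]) :
    ∃ m₁ m₂ n₁ n₂ : ℍ[ℝ],
      (∀ z₁ z₂ : ℂ, Λ (iotaC z₁ + iotaC z₂ * qj)
        = m₁ * iotaC z₁ + m₂ * iotaC z₂ + n₁ * iotaC ((starRingEnd ℂ) z₁)
          + n₂ * iotaC ((starRingEnd ℂ) z₂)) ∧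
      (∀ m₁' m₂' n₁' n₂' : ℍ[ℝ],
        (∀ z₁ z₂ : ℂ, Λ (iotaC z₁ + iotaC z₂ * qj)
          = m₁' * iotaC z₁ + m₂' * iotaC z₂ + n₁' * iotaC ((starRingEnd ℂ) z₁)
            + n₂' * iotaC ((starRingEnd ℂ) z₂)) →
        m₁' = m₁ ∧ m₂' = m₂ ∧ n₁' = n₁ ∧ n₂' = n₂) ∧
      (1 / 4 : ℝ) • (Λ 1 * 1 + Λ qi * qi + Λ qj * qj + Λ qk * qk)
        = (1 / 2 : ℝ) • (n₁ + n₂ * qj) ∧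
      (IsReg Λ ↔ n₂ = n₁ * qj) := by
  set A := Λ 1 with hA
  set B := Λ qi with hB
  set C := Λ qj with hC
  set D := Λ qk with hD
  clear_value A B C D
  refine ⟨(1/2 : ℝ) • (A - B * qi), (1/2 : ℝ) • (C - D * qi),
    (1/2 : ℝ) • (A + B * qi), (1/2 : ℝ) • (C + D * qi), ?_, ?_, ?_, ?_⟩
  · intro z₁ z₂
    rw [iotaC_decomp, map_add, map_add, map_add, map_smul, map_smul, map_smul, map_smul,
      ← hA, ← hB, ← hC, ← hD]
    ext <;>
      simp [Quaternion.re_mul, Quaternion.imI_mul, Quaternion.imJ_mul, Quaternion.imK_mul, Complex.conj_re, Complex.conj_im, mul_comm, mul_left_comm] <;>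
      ring
  · intro m₁' m₂' n₁' n₂' h'
    have h10 := h' 1 0
    have hI0 := h' Complex.I 0
    have h01 := h' 0 1
    have h0I := h' 0 Complex.I
    simp only [iotaC_one, iotaC_zero, iotaC_I, map_one, map_zero, Complex.conj_I,
      iotaC_negI, mul_zero, add_zero, zero_add, mul_one, one_mul, zero_mul, mul_neg] at h10 hI0 h01 h0I
    -- h10 : Λ 1 = m₁' + n₁', hI0 : Λ qi = m₁'*qi - n₁'*qi, etc.
    have e1 : A = m₁' + n₁' := by rw [hA]; simpa using h10
    have e2 : B * qi = -(m₁' - n₁') := by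
      rw [hB]
      have : Λ qi = m₁' * qi + -(n₁' * qi) := by simpa using hI0
      rw [this]
      have hii : qi * qi = -1 := by ext <;> simp [Quaternion.re_mul, Quaternion.imI_mul, Quaternion.imJ_mul, Quaternion.imK_mul]
      calc (m₁' * qi + -(n₁' * qi)) * qi = (m₁' - n₁') * (qi * qi) := by noncomm_ring
        _ = -(m₁' - n₁') := by rw [hii]; noncomm_ring
    have e3 : C = m₂' + n₂' := by rw [hC]; simpa using h01
    have e4 : D * qi = -(m₂' - n₂') := by
      rw [hD]
      have hij : qi * qj = qk := by ext <;> simp [Quaternion.re_mul, Quaternion.imI_mul, Quaternion.imJ_mul, Quaternion.imK_mul]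
      have : Λ qk = m₂' * qi + -(n₂' * qi) := by rw [← hij]; simpa using h0I
      rw [this]
      have hii : qi * qi = -1 := by ext <;> simp [Quaternion.re_mul, Quaternion.imI_mul, Quaternion.imJ_mul, Quaternion.imK_mul]
      calc (m₂' * qi + -(n₂' * qi)) * qi = (m₂' - n₂') * (qi * qi) := by noncomm_ring
        _ = -(m₂' - n₂') := by rw [hii]; noncomm_ring
    refine ⟨?_, ?_, ?_, ?_⟩
    · rw [e1, e2]; module
    · rw [e3, e4]; module
    · rw [e1, e2]; module
    · rw [e3, e4]; module
  · exact reg_aux A B C D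
  · have key := key_aux A B C D
    have hjne : (-qj : ℍ[ℝ]) ≠ 0 := by
      intro h
      have := congrArg QuaternionAlgebra.imJ h
      simp at this
    have hregiff : IsReg Λ ↔ A * 1 + B * qi + C * qj + D * qk = 0 := by
      rw [IsReg, hA, hB, hC, hD]
    constructor
    · intro hreg
      have h0 : A * 1 + B * qi + C * qj + D * qk = 0 := hregiff.mp hreg
      rw [h0, zero_mul, smul_zero, sub_eq_zero] at key
      exact key
    · intro hn
      rw [hn, sub_self] at key
      have h0 : (A * 1 + B * qi + C * qj + D * qk) * (-qj) = 0 := by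
        have := key.symm
        rwa [smul_eq_zero, or_iff_right (by norm_num : (1/2 : ℝ) ≠ 0)] at this
      have := (mul_eq_zero.mp h0).resolve_right hjne
      exact hregiff.mpr this

end
end

section
/- Let U ⊆ ℍ be an open set and let f : ℍ → ℍ be differentiable on U. Suppose there exists a map I : U → ℍ such that, for every p ∈ U, I(p)² = −1 and df_p(I(p)·v) = df_p(v)·I(p) for all v ∈ ℍ. Then f is right Fueter-regular on U, i.e., df_p(1)·1 + df_p(i)·i + df_p(j)·j + df_p(k)·k = 0 for every p ∈ U. -/
noncomputable section

open Quaternion Classical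

private lemma fueterAux_bigid (A B C D : ℍ[ℝ]) (a b c : ℝ) :
    (a • B + b • C + c • D) * (a • qi + b • qj + c • qk)
    + ((-a) • A + c • C + (-b) • D) * ((-a) • 1 + c • qj + (-b) • qk)
    + ((-b) • A + (-c) • B + a • D) * ((-b) • 1 + (-c) • qi + a • qk)
    + ((-c) • A + b • B + (-a) • C) * ((-c) • 1 + b • qi + (-a) • qj)
    = (a^2+b^2+c^2) • (A * 1 + B * qi + C * qj + D * qk) := by
  simp only [add_mul, mul_add, smul_mul_assoc, mul_smul_comm, smul_smul, mul_one]
  module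

private lemma fueterAux_comps :
    qi.re = 0 ∧ qi.imI = 1 ∧ qi.imJ = 0 ∧ qi.imK = 0 ∧ qj.re = 0 ∧ qj.imI = 0 ∧ qj.imJ = 1 ∧ qj.imK = 0 ∧
    qk.re = 0 ∧ qk.imI = 0 ∧ qk.imJ = 0 ∧ qk.imK = 1 := by
  refine ⟨rfl, rfl, rfl, rfl, rfl, rfl, rfl, rfl, rfl, rfl, rfl, rfl⟩

set_option maxHeartbeats 1000000 in
private lemma fueterAux_key (Λ : ℍ[ℝ] →ₗ[ℝ] ℍ[ℝ]) (I : ℍ[ℝ]) (h2 : I ^ 2 = -1)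
    (hc : ∀ v, Λ (I * v) = Λ v * I) :
    Λ 1 * 1 + Λ qi * qi + Λ qj * qj + Λ qk * qk = 0 := by
  have hext := h2
  rw [sq, Quaternion.ext_iff] at hext
  simp only [Quaternion.re_mul, Quaternion.imI_mul, Quaternion.imJ_mul, Quaternion.imK_mul,
    Quaternion.re_neg, Quaternion.imI_neg, Quaternion.imJ_neg, Quaternion.imK_neg,
    Quaternion.re_one, Quaternion.imI_one, Quaternion.imJ_one, Quaternion.imK_one] at hext
  obtain ⟨e1, ei, ej, ek⟩ := hext
  have hre : I.re = 0 := by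
    nlinarith [sq_nonneg I.re, sq_nonneg I.imI, sq_nonneg I.imJ, sq_nonneg I.imK]
  have hn : I.imI ^ 2 + I.imJ ^ 2 + I.imK ^ 2 = 1 := by nlinarith [hre]
  set a := I.imI; set b := I.imJ; set c := I.imK
  have hm1 : I * 1 = a • qi + b • qj + c • qk := by
    ext <;> simp [fueterAux_comps, hre, Quaternion.re_smul] <;> rfl
  have hmi : I * qi = (-a) • 1 + c • qj + (-b) • qk := by
    ext <;> simp [fueterAux_comps, hre, Quaternion.re_mul, Quaternion.imI_mul,
      Quaternion.imJ_mul, Quaternion.imK_mul, Quaternion.re_smul] <;> rfl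
  have hmj : I * qj = (-b) • 1 + (-c) • qi + a • qk := by
    ext <;> simp [fueterAux_comps, hre, Quaternion.re_mul, Quaternion.imI_mul,
      Quaternion.imJ_mul, Quaternion.imK_mul, Quaternion.re_smul] <;> rfl
  have hmk : I * qk = (-c) • 1 + b • qi + (-a) • qj := by
    ext <;> simp [fueterAux_comps, hre, Quaternion.re_mul, Quaternion.imI_mul,
      Quaternion.imJ_mul, Quaternion.imK_mul, Quaternion.re_smul] <;> rfl
  have hid : Λ (I * 1) * (I * 1) + Λ (I * qi) * (I * qi)
      + Λ (I * qj) * (I * qj) + Λ (I * qk) * (I * qk)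
      = (a^2+b^2+c^2) • (Λ 1 * 1 + Λ qi * qi + Λ qj * qj + Λ qk * qk) := by
    have e1 : Λ (I * 1) = a • Λ qi + b • Λ qj + c • Λ qk := by rw [hm1]; simp
    have e2 : Λ (I * qi) = (-a) • Λ 1 + c • Λ qj + (-b) • Λ qk := by rw [hmi]; simp
    have e3 : Λ (I * qj) = (-b) • Λ 1 + (-c) • Λ qi + a • Λ qk := by rw [hmj]; simp
    have e4 : Λ (I * qk) = (-c) • Λ 1 + b • Λ qi + (-a) • Λ qj := by rw [hmk]; simp
    rw [e1, e2, e3, e4, hm1, hmi, hmj, hmk]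
    exact fueterAux_bigid (Λ 1) (Λ qi) (Λ qj) (Λ qk) a b c
  rw [hn, one_smul] at hid
  have hterm : ∀ v : ℍ[ℝ], Λ (I * v) * (I * v) = -(Λ v * v) := by
    intro v
    rw [hc v, mul_assoc, ← mul_assoc I I v, ← sq, h2, neg_one_mul, mul_neg]
  rw [hterm, hterm, hterm, hterm] at hid
  have h2F : (Λ 1 * 1 + Λ qi * qi + Λ qj * qj + Λ qk * qk)
      + (Λ 1 * 1 + Λ qi * qi + Λ qj * qj + Λ qk * qk) = 0 := by
    nth_rewrite 2 [← hid]
    abel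
  have h3 : (2:ℝ) • (Λ 1 * 1 + Λ qi * qi + Λ qj * qj + Λ qk * qk) = 0 := by
    rw [two_smul]; exact h2F
  rcases smul_eq_zero.mp h3 with h | h
  · norm_num at h
  · exact h

/-- If `f` is differentiable on an open set `U` and there is `I : U → 𝕊` with
`df_p(I(p)v) = df_p(v)I(p)` for all `p ∈ U` and `v ∈ ℍ`, then `f` is right
Fueter-regular on `U`. -/
theorem stmt18 (U : Set ℍ[ℝ]) (hU : IsOpen U) (f : ℍ[ℝ] → ℍ[ℝ])
    (hdiff : ∀ p ∈ U, DifferentiableAt ℝ f p) (I : ℍ[ℝ] → ℍ[ℝ])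
    (hI : ∀ p ∈ U, I p ^ 2 = -1 ∧ ∀ v, fderiv ℝ f p (I p * v) = fderiv ℝ f p v * I p) :
    ∀ p ∈ U, fderiv ℝ f p 1 * 1 + fderiv ℝ f p qi * qi
      + fderiv ℝ f p qj * qj + fderiv ℝ f p qk * qk = 0 := by
  intro p hp
  obtain ⟨hsq, hcm⟩ := hI p hp
  exact fueterAux_key (fderiv ℝ f p : ℍ[ℝ] →ₗ[ℝ] ℍ[ℝ]) (I p) hsq (fun v => hcm v)

end
end
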